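/- Let C be a Λ-MT code over F_q with index ℓ, block lengths (m_1,…,m_ℓ), GPM G, and identical-equation matrix A (so A·G = diag(x^{m_i}−λ_i)). Suppose m_i = m_{ℓ−i+1} and λ_i = λ_{ℓ−i+1}^{−1} for all 1 ≤ i ≤ ℓ. Assume each entry in the j-th column of G has degree at most m_j, and let N = lcm(t_1 m_1,…,t_ℓ m_ℓ). Then C is reversible (i.e., C equals its reversed code) if and only if G(1/x)·diag(x^{m_i})·J_ℓ·diag((x^N−1)/(x^{m_i}−λ_i))·A ≡ 0 (mod x^N−1), where J_ℓ is the ℓ×ℓ backward identity matrix. -/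

import Mathlib

open Polynomial Matrix

/-- constacyclic shift with constant `lam` on one block of length `m`:
`(a₀, …, a_{m-1}) ↦ (lam * a_{m-1}, a₀, …, a_{m-2})`. -/
def blockShift {F : Type*} [Field F] (lam : F) {m : ℕ} (a : Fin m → F) : Fin m → F :=
  fun j => if j.val = 0 then lam * a ⟨m - 1, by have := j.isLt; omega⟩
           else a ⟨j.val - 1, by have := j.isLt; omega⟩

/-- `CC ⊆ ⊕ᵢ F^{m i}` is a Λ-multi-twisted code: it is invariant under the blockwise
constacyclic shift `T_Λ`. -/
def IsMT {F : Type*} [Field F] {ℓ : ℕ} (lam : Fin ℓ → F) {m : Fin ℓ → ℕ}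
    (CC : Submodule F (∀ i, Fin (m i) → F)) : Prop :=
  ∀ v ∈ CC, (fun i => blockShift (lam i) (v i)) ∈ CC

/-- from a polynomial vector in `(F[x])^ℓ` to a blocked vector: reduce component `i`
modulo `x^{m i} - λᵢ` and take the coefficients. -/
noncomputable def toCode {F : Type*} [Field F] {ℓ : ℕ} (lam : Fin ℓ → F) (m : Fin ℓ → ℕ)
    (q : Fin ℓ → Polynomial F) : ∀ i, Fin (m i) → F :=
  fun i j => ((q i) %ₘ (X ^ (m i) - Polynomial.C (lam i))).coeff j

/-- `G` is a generator polynomial matrix (GPM) of the Λ-MT code `CC`: its rows form a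
minimal generating set (equivalently, since the corresponding submodule of `(F[x])^ℓ` has
rank `ℓ`, a linearly independent generating set) of the `F[x]`-submodule of `(F[x])^ℓ`
corresponding to `CC`, namely `{q | toCode lam m q ∈ CC}`. -/
def IsGPM {F : Type*} [Field F] {ℓ : ℕ} (lam : Fin ℓ → F) (m : Fin ℓ → ℕ)
    (CC : Submodule F (∀ i, Fin (m i) → F))
    (G : Matrix (Fin ℓ) (Fin ℓ) (Polynomial F)) : Prop :=
  LinearIndependent (Polynomial F) (fun i => G i) ∧
  (Submodule.span (Polynomial F) (Set.range (fun i => G i)) :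
      Set (Fin ℓ → Polynomial F)) = {q | toCode lam m q ∈ CC}

/-- coordinate reversal of a blocked vector as a linear endomorphism, available when the
block lengths are palindromic (`m i = m (rev i)`): block `i` of the result is the
reversal of block `ℓ-1-i` of the input. -/
def revWhole {F : Type*} [Field F] {ℓ : ℕ} {m : Fin ℓ → ℕ} (hmm : ∀ i, m i = m i.rev) :
    (∀ i, Fin (m i) → F) →ₗ[F] (∀ i, Fin (m i) → F) where
  toFun v := fun i j => v i.rev (Fin.rev (Fin.cast (hmm i) j))
  map_add' _ _ := rfl
  map_smul' _ _ := rfl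

namespace Stmt19Aux

variable {F : Type*} [Field F]

/-! ### single-block polynomial computations -/

lemma reflect_natDegree_le {m : ℕ} {q : Polynomial F} (hq : q.natDegree ≤ m) :
    (reflect m q).natDegree ≤ m := by
  refine natDegree_le_iff_coeff_eq_zero.2 fun k hk => ?_
  rw [coeff_reflect, revAt_eq_self_of_lt hk]
  exact coeff_eq_zero_of_natDegree_lt (hq.trans_lt hk)

lemma modEq (m : ℕ) (hm : 0 < m) (μ : F) (q : Polynomial F) (hq : q.natDegree ≤ m) :
    q %ₘ (X ^ m - C μ) = q - C (q.coeff m) * (X ^ m - C μ) := by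
  have hmonic : (X ^ m - C μ).Monic := monic_X_pow_sub_C μ hm.ne'
  have h0 : (C (q.coeff m) * (X ^ m - C μ)) %ₘ (X ^ m - C μ) = 0 :=
    (modByMonic_eq_zero_iff_dvd hmonic).2 (Dvd.intro_left _ rfl)
  have hdeg : (q - C (q.coeff m) * (X ^ m - C μ)).degree < (X ^ m - C μ).degree := by
    rw [degree_X_pow_sub_C hm]
    refine (degree_lt_iff_coeff_zero _ _).2 fun k hk => ?_
    rcases eq_or_lt_of_le hk with h | h
    · simp [← h, coeff_X_pow, coeff_C, hm.ne']
    · have h1 : q.coeff k = 0 := coeff_eq_zero_of_natDegree_lt (hq.trans_lt h)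
      have h2 : k ≠ m := h.ne'
      have h3 : k ≠ 0 := by omega
      simp [coeff_X_pow, coeff_C, h1, h2, h3]
  calc q %ₘ (X ^ m - C μ)
      = (q - C (q.coeff m) * (X ^ m - C μ)) %ₘ (X ^ m - C μ) := by
        rw [sub_modByMonic, h0, sub_zero]
    _ = _ := (modByMonic_eq_self_iff hmonic).2 hdeg

/-- coefficients of the reduction of the `m`-reflection of `q`, `deg q ≤ m`. -/
lemma blockA {m : ℕ} (hm : 0 < m) {μ : F} (hμ : μ ≠ 0) (q : Polynomial F)
    (hq : q.natDegree ≤ m) {j : ℕ} (hj : j < m) :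
    ((reflect m q) %ₘ (X ^ m - C μ⁻¹)).coeff j =
      if j = 0 then μ⁻¹ * ((q %ₘ (X ^ m - C μ)).coeff 0)
      else (q %ₘ (X ^ m - C μ)).coeff (m - j) := by
  rw [modEq m hm μ⁻¹ _ (reflect_natDegree_le hq), modEq m hm μ q hq]
  have hrm : (reflect m q).coeff m = q.coeff 0 := by
    rw [coeff_reflect, revAt_le (le_refl m), Nat.sub_self]
  have hrj : (reflect m q).coeff j = q.coeff (m - j) := by
    rw [coeff_reflect, revAt_le hj.le]
  rcases eq_or_ne j 0 with rfl | hj0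
  · simp only [if_pos rfl, coeff_sub, hrj, hrm, Nat.sub_zero, coeff_C_mul, coeff_sub,
      coeff_X_pow, coeff_C, if_neg hm.ne', if_pos rfl, if_neg hm.ne, if_true]
    field_simp
    ring
  · have h1 : j ≠ m := hj.ne
    simp only [if_neg hj0, coeff_sub, hrj, hrm, coeff_C_mul, coeff_X_pow, coeff_C,
      if_neg h1, if_neg hj0]
    have h2 : m - j ≠ m := by omega
    have h3 : m - j ≠ 0 := by omega
    simp [coeff_X_pow, coeff_C, h2, h3]

lemma X_mul_mod {m : ℕ} (hm : 0 < m) (μ : F) (q : Polynomial F) :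
    (X * q) %ₘ (X ^ m - C μ) = (X * (q %ₘ (X ^ m - C μ))) %ₘ (X ^ m - C μ) := by
  have hmonic : (X ^ m - C μ).Monic := monic_X_pow_sub_C μ hm.ne'
  conv_lhs => rw [← modByMonic_add_div q (X ^ m - C μ)]
  rw [mul_add, add_modByMonic]
  have : (X * ((X ^ m - C μ) * (q /ₘ (X ^ m - C μ)))) %ₘ (X ^ m - C μ) = 0 :=
    (modByMonic_eq_zero_iff_dvd hmonic).2 ⟨X * (q /ₘ (X ^ m - C μ)), by ring⟩
  rw [this, add_zero]

lemma Xp_natDeg {m : ℕ} (hm : 0 < m) (μ : F) (q : Polynomial F) :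
    (X * (q %ₘ (X ^ m - C μ))).natDegree ≤ m := by
  have hmonic : (X ^ m - C μ).Monic := monic_X_pow_sub_C μ hm.ne'
  have hd : (q %ₘ (X ^ m - C μ)).degree < (m : ℕ) := by
    have := degree_modByMonic_lt q hmonic
    rwa [degree_X_pow_sub_C hm] at this
  refine natDegree_le_iff_coeff_eq_zero.2 fun k hk => ?_
  obtain ⟨k, rfl⟩ : ∃ k', k = k' + 1 := ⟨k - 1, by omega⟩
  rw [coeff_X_mul]
  exact coeff_eq_zero_of_degree_lt (hd.trans_le (by exact_mod_cast by omega))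

lemma coeff_mod_X_mul {m : ℕ} (hm : 0 < m) (μ : F) (q : Polynomial F) :
    ∀ c : ℕ, c < m →
      ((X * q) %ₘ (X ^ m - C μ)).coeff c =
        if c = 0 then μ * ((q %ₘ (X ^ m - C μ)).coeff (m - 1))
        else (q %ₘ (X ^ m - C μ)).coeff (c - 1) := by
  intro c hc
  set p := q %ₘ (X ^ m - C μ) with hp
  rw [X_mul_mod hm μ q, ← hp, modEq m hm μ _ (Xp_natDeg hm μ q)]
  have hXm : (X * p).coeff m = p.coeff (m - 1) := by
    obtain ⟨k, rfl⟩ : ∃ k', m = k' + 1 := ⟨m - 1, by omega⟩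
    rw [coeff_X_mul]; simp
  rcases eq_or_ne c 0 with rfl | hc0
  · simp only [if_pos rfl, coeff_sub, coeff_C_mul, coeff_X_pow, coeff_C, hXm]
    rw [Polynomial.coeff_X_mul_zero]
    simp [hm.ne]
    rw [← hp, hXm]
    ring
  · obtain ⟨k, rfl⟩ : ∃ k', c = k' + 1 := ⟨c - 1, by omega⟩
    simp only [if_neg hc0, coeff_sub, coeff_X_mul, coeff_C_mul, coeff_X_pow, coeff_C, hXm]
    have h2 : k + 1 ≠ m := hc.ne
    simp [h2, hc0, hp]

lemma fdvd (m : ℕ) (μ : F) {N : ℕ} (h : orderOf μ * m ∣ N) :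
    (X ^ m - C μ) ∣ (X ^ N - 1 : Polynomial F) := by
  obtain ⟨k, hk⟩ := h
  have h1 : (X ^ m - C μ : Polynomial F) ∣ ((X ^ m) ^ orderOf μ - (C μ) ^ orderOf μ) :=
    sub_dvd_pow_sub_pow _ _ _
  have h2 : ((X ^ m) ^ orderOf μ - (C μ) ^ orderOf μ : Polynomial F)
      = X ^ (orderOf μ * m) - 1 := by
    rw [← pow_mul, ← map_pow, pow_orderOf_eq_one, Polynomial.C_1, mul_comm m (orderOf μ)]
  rw [h2] at h1
  refine h1.trans ?_
  have h3 : (X ^ (orderOf μ * m) - 1 : Polynomial F) ∣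
      ((X ^ (orderOf μ * m)) ^ k - 1 ^ k) := sub_dvd_pow_sub_pow _ _ _
  rwa [one_pow, ← pow_mul, ← hk] at h3

/-! ### matrix lemmas -/

lemma matrix_eq_zero_of_mul_right {ℓ : ℕ} {R : Type*} [CommRing R]
    {G M : Matrix (Fin ℓ) (Fin ℓ) R} (hli : LinearIndependent R (fun i => G i))
    (h : M * G = 0) : M = 0 := by
  ext a b
  rw [Matrix.zero_apply]
  refine Fintype.linearIndependent_iff.1 hli (fun i => M a i) ?_ b
  funext j
  have h1 : (M * G) a j = 0 := by rw [h]; simp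
  rw [Matrix.mul_apply] at h1
  simpa [Finset.sum_apply] using h1

lemma GDA_eq {ℓ : ℕ} {G A : Matrix (Fin ℓ) (Fin ℓ) (Polynomial F)}
    {f d : Fin ℓ → Polynomial F} {c : Polynomial F}
    (hli : LinearIndependent (Polynomial F) (fun i => G i))
    (hA : A * G = Matrix.diagonal f) (hdf : ∀ i, d i * f i = c) :
    G * (Matrix.diagonal d * A) = c • (1 : Matrix (Fin ℓ) (Fin ℓ) (Polynomial F)) := by
  have key : (G * (Matrix.diagonal d * A) - c • 1) * G = 0 := by
    rw [sub_mul, Matrix.mul_assoc, Matrix.mul_assoc, hA, Matrix.diagonal_mul_diagonal]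
    have h1 : Matrix.diagonal (fun i => d i * f i)
        = c • (1 : Matrix (Fin ℓ) (Fin ℓ) (Polynomial F)) := by
      ext a b
      by_cases hab : a = b <;>
        simp [Matrix.diagonal_apply, Matrix.one_apply, hab, hdf]
    rw [h1, Matrix.mul_smul, Matrix.mul_one, Matrix.smul_mul, Matrix.one_mul, sub_self]
  have h2 := matrix_eq_zero_of_mul_right hli key
  rwa [sub_eq_zero] at h2

lemma mem_iff_dvd {ℓ : ℕ} {G A : Matrix (Fin ℓ) (Fin ℓ) (Polynomial F)}
    {f d : Fin ℓ → Polynomial F} {c : Polynomial F} (hc : c ≠ 0)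
    (hli : LinearIndependent (Polynomial F) (fun i => G i))
    (hA : A * G = Matrix.diagonal f) (hdf : ∀ i, d i * f i = c)
    (q : Fin ℓ → Polynomial F) :
    q ∈ Submodule.span (Polynomial F) (Set.range fun i => G i) ↔
      ∀ j, c ∣ ∑ i, q i * (d i * A i j) := by
  have hGDA := GDA_eq hli hA hdf
  constructor
  · intro hq j
    obtain ⟨u, hu⟩ := (Submodule.mem_span_range_iff_exists_fun _).1 hq
    have hq' : ∀ i, q i = ∑ a, u a * G a i := by
      intro i
      rw [← hu]
      simp [Finset.sum_apply]
    have key : ∑ i, q i * (d i * A i j) = u j * c := by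
      calc ∑ i, q i * (d i * A i j)
          = ∑ i, ∑ a, u a * (G a i * (d i * A i j)) := by
            refine Finset.sum_congr rfl fun i _ => ?_
            rw [hq' i, Finset.sum_mul]
            exact Finset.sum_congr rfl fun a _ => by ring
        _ = ∑ a, ∑ i, u a * (G a i * (d i * A i j)) := Finset.sum_comm
        _ = ∑ a, u a * ((G * (Matrix.diagonal d * A)) a j) := by
            refine Finset.sum_congr rfl fun a _ => ?_
            rw [Matrix.mul_apply, Finset.mul_sum]
            refine Finset.sum_congr rfl fun i _ => ?_
            rw [Matrix.diagonal_mul]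
        _ = ∑ a, u a * ((c • (1 : Matrix (Fin ℓ) (Fin ℓ) (Polynomial F))) a j) := by
            rw [hGDA]
        _ = u j * c := by
            rw [Finset.sum_eq_single j]
            · simp [Matrix.one_apply, mul_comm]
            · intro b _ hb
              simp [Matrix.one_apply, hb]
            · simp
    rw [key]
    exact dvd_mul_left c (u j)
  · intro h
    choose w hw using h
    have hq : ∀ j, c * q j = c * ∑ a, w a * G a j := by
      intro j
      calc c * q j = q j * (d j * f j) := by rw [hdf j]; ring
        _ = ∑ i, q i * (d i * (Matrix.diagonal f) i j) := by
            rw [Finset.sum_eq_single j]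
            · rw [Matrix.diagonal_apply_eq]
            · intro b _ hb
              rw [Matrix.diagonal_apply_ne _ hb, mul_zero, mul_zero]
            · simp
        _ = ∑ i, q i * (d i * ∑ a, A i a * G a j) := by
            refine Finset.sum_congr rfl fun i _ => ?_
            rw [← hA, Matrix.mul_apply]
        _ = ∑ i, ∑ a, q i * (d i * A i a) * G a j := by
            refine Finset.sum_congr rfl fun i _ => ?_
            rw [Finset.mul_sum, Finset.mul_sum]
            exact Finset.sum_congr rfl fun a _ => by ring
        _ = ∑ a, (∑ i, q i * (d i * A i a)) * G a j := by
            rw [Finset.sum_comm]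
            exact Finset.sum_congr rfl fun a _ => by rw [Finset.sum_mul]
        _ = ∑ a, c * w a * G a j := by
            refine Finset.sum_congr rfl fun a _ => ?_
            rw [hw a]
        _ = c * ∑ a, w a * G a j := by
            rw [Finset.mul_sum]
            exact Finset.sum_congr rfl fun a _ => by ring
    have hq2 : ∀ j, q j = ∑ a, w a * G a j := fun j => mul_left_cancel₀ hc (hq j)
    refine (Submodule.mem_span_range_iff_exists_fun _).2 ⟨w, ?_⟩
    funext j
    simp only [Finset.sum_apply, Pi.smul_apply, smul_eq_mul]
    exact (hq2 j).symm

/-! ### span closure under `X •` -/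

lemma span_subset_closed {ℓ : ℕ} (S : Submodule F (Fin ℓ → Polynomial F))
    (hX : ∀ p ∈ S, (fun i => X * p i) ∈ S)
    {s : Set (Fin ℓ → Polynomial F)} (hs : s ⊆ S) :
    ∀ q ∈ Submodule.span (Polynomial F) s, q ∈ S := by
  have hmono : ∀ (n : ℕ) (a : F), ∀ p ∈ S, (fun i => C a * X ^ n * p i) ∈ S := by
    intro n
    induction n with
    | zero =>
      intro a p hp
      have h : (fun i => C a * X ^ 0 * p i) = a • p := by
        funext i
        rw [Pi.smul_apply, Polynomial.smul_eq_C_mul, pow_zero, mul_one]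
      rw [h]
      exact S.smul_mem a hp
    | succ n ih =>
      intro a p hp
      have h : (fun i => C a * X ^ (n + 1) * p i) = fun i => X * (C a * X ^ n * p i) := by
        funext i; ring
      rw [h]
      exact hX _ (ih a p hp)
  intro q hq
  induction hq using Submodule.span_induction with
  | mem x hx => exact hs hx
  | zero => exact S.zero_mem
  | add x y hx hy ihx ihy => exact S.add_mem ihx ihy
  | smul r x hx ih =>
    induction r using Polynomial.induction_on' with
    | add p q hp hq => rw [add_smul]; exact S.add_mem hp hq
    | monomial n a =>
      have h2 : (monomial n a : Polynomial F) • x = fun i => C a * X ^ n * x i := by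
        funext i
        rw [Pi.smul_apply, smul_eq_mul, ← C_mul_X_pow_eq_monomial]
      rw [h2]
      exact hmono n a x ih

/-! ### the shift as a linear equivalence -/

def invShift (lam : F) {mm : ℕ} (a : Fin mm → F) : Fin mm → F :=
  fun j => if h : (j : ℕ) = mm - 1 then
             lam⁻¹ * a ⟨0, Nat.lt_of_le_of_lt (Nat.zero_le _) j.isLt⟩
           else a ⟨(j : ℕ) + 1, by have := j.isLt; omega⟩

lemma blockShift_apply_zero {lam : F} {mm : ℕ} (a : Fin mm → F) (j : Fin mm)
    (h : (j : ℕ) = 0) :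
    blockShift lam a j = lam * a ⟨mm - 1, by have := j.isLt; omega⟩ := by
  simp only [blockShift]
  exact if_pos h

lemma blockShift_apply_pos {lam : F} {mm : ℕ} (a : Fin mm → F) (j : Fin mm)
    (h : (j : ℕ) ≠ 0) :
    blockShift lam a j = a ⟨(j : ℕ) - 1, by have := j.isLt; omega⟩ := by
  simp only [blockShift]
  exact if_neg h

lemma invShift_apply_last {lam : F} {mm : ℕ} (a : Fin mm → F) (j : Fin mm)
    (h : (j : ℕ) = mm - 1) :
    invShift lam a j = lam⁻¹ * a ⟨0, by have := j.isLt; omega⟩ := by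
  simp only [invShift]
  exact dif_pos h

lemma invShift_apply_ne {lam : F} {mm : ℕ} (a : Fin mm → F) (j : Fin mm)
    (h : (j : ℕ) ≠ mm - 1) :
    invShift lam a j = a ⟨(j : ℕ) + 1, by have := j.isLt; omega⟩ := by
  simp only [invShift]
  exact dif_neg h

lemma invShift_blockShift {lam : F} (hl : lam ≠ 0) {mm : ℕ} (a : Fin mm → F) :
    invShift lam (blockShift lam a) = a := by
  funext j
  have hlt := j.isLt
  by_cases h : (j : ℕ) = mm - 1
  · rw [invShift_apply_last _ j h, blockShift_apply_zero _ _ (rfl : ((0:ℕ)) = 0),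
      ← mul_assoc, inv_mul_cancel₀ hl, one_mul]
    exact congrArg a (Fin.ext h.symm)
  · rw [invShift_apply_ne _ j h, blockShift_apply_pos _ _ (Nat.succ_ne_zero _)]
    exact congrArg a (Fin.ext (by simp))

lemma blockShift_invShift {lam : F} (hl : lam ≠ 0) {mm : ℕ} (a : Fin mm → F) :
    blockShift lam (invShift lam a) = a := by
  funext j
  have hlt := j.isLt
  by_cases h : (j : ℕ) = 0
  · rw [blockShift_apply_zero _ j h, invShift_apply_last _ _ (rfl : mm - 1 = mm - 1),
      ← mul_assoc, mul_inv_cancel₀ hl, one_mul]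
    exact congrArg a (Fin.ext h.symm)
  · rw [blockShift_apply_pos _ j h,
      invShift_apply_ne _ _ (show ((⟨(j:ℕ)-1, by omega⟩ : Fin mm) : ℕ) ≠ mm - 1 by
        simp only []; omega)]
    exact congrArg a (Fin.ext (by simp; omega))

variable {ℓ : ℕ} {m : Fin ℓ → ℕ} {lam : Fin ℓ → F}

def Teq (lam : Fin ℓ → F) (m : Fin ℓ → ℕ) (hlam : ∀ i, lam i ≠ 0) :
    (∀ i, Fin (m i) → F) ≃ₗ[F] (∀ i, Fin (m i) → F) where
  toFun v i := blockShift (lam i) (v i)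
  invFun v i := invShift (lam i) (v i)
  map_add' u v := by
    funext i j
    by_cases h : (j : ℕ) = 0 <;> simp [blockShift, h, mul_add]
  map_smul' c v := by
    funext i j
    by_cases h : (j : ℕ) = 0 <;> simp [blockShift, h, mul_comm, mul_left_comm]
  left_inv v := by
    funext i
    exact invShift_blockShift (hlam i) (v i)
  right_inv v := by
    funext i
    exact blockShift_invShift (hlam i) (v i)

lemma T_mem_iff (hlam : ∀ i, lam i ≠ 0) {CC : Submodule F (∀ i, Fin (m i) → F)}
    (hC : IsMT lam CC) (v : ∀ i, Fin (m i) → F) :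
    (fun i => blockShift (lam i) (v i)) ∈ CC ↔ v ∈ CC := by
  have heq : CC.map ((Teq lam m hlam : (∀ i, Fin (m i) → F) ≃ₗ[F] (∀ i, Fin (m i) → F)) :
      (∀ i, Fin (m i) → F) →ₗ[F] (∀ i, Fin (m i) → F)) = CC := by
    apply Submodule.eq_of_le_of_finrank_le
    · rintro x hx
      obtain ⟨u, hu, rfl⟩ := Submodule.mem_map.1 hx
      exact hC u hu
    · exact le_of_eq (LinearEquiv.finrank_map_eq (Teq lam m hlam) CC).symm
  constructor
  · intro h
    rw [← heq] at h
    obtain ⟨u, hu, huv⟩ := Submodule.mem_map.1 h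
    have h2 : u = v := (Teq lam m hlam).injective huv
    rwa [← h2]
  · intro h
    exact hC v h

noncomputable def toCodeLin (lam : Fin ℓ → F) (m : Fin ℓ → ℕ) :
    (Fin ℓ → Polynomial F) →ₗ[F] (∀ i, Fin (m i) → F) where
  toFun := toCode lam m
  map_add' u v := by
    funext i j
    simp [toCode, add_modByMonic]
  map_smul' c v := by
    funext i j
    simp [toCode, Polynomial.smul_modByMonic]

lemma exists_poly (lam : Fin ℓ → F) (m : Fin ℓ → ℕ) (hm : ∀ i, 0 < m i)
    (v : ∀ i, Fin (m i) → F) : ∃ q : Fin ℓ → Polynomial F, toCode lam m q = v := by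
  refine ⟨fun i => ∑ j : Fin (m i), C (v i j) * X ^ (j : ℕ), ?_⟩
  funext i j
  show ((∑ j' : Fin (m i), C (v i j') * X ^ (j' : ℕ)) %ₘ (X ^ m i - C (lam i))).coeff j
      = v i j
  have hmonic : (X ^ m i - C (lam i)).Monic := monic_X_pow_sub_C (lam i) (hm i).ne'
  have hdeg : (∑ j' : Fin (m i), C (v i j') * X ^ (j' : ℕ)).degree
      < (X ^ m i - C (lam i)).degree := by
    rw [degree_X_pow_sub_C (hm i)]
    refine lt_of_le_of_lt (degree_sum_le _ _) ?_
    rw [Finset.sup_lt_iff (WithBot.bot_lt_coe _)]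
    intro b _
    exact lt_of_le_of_lt (degree_C_mul_X_pow_le _ _) (by exact_mod_cast b.isLt)
  rw [(modByMonic_eq_self_iff hmonic).2 hdeg, finset_sum_coeff, Finset.sum_eq_single j]
  · simp [coeff_C_mul, coeff_X_pow]
  · intro b _ hb
    have hb' : (j : ℕ) ≠ (b : ℕ) := fun hh => hb (Fin.ext hh.symm)
    simp [coeff_C_mul, coeff_X_pow, hb']
  · simp

lemma key9 (hm : ∀ i, 0 < m i) (hlam : ∀ i, lam i ≠ 0) (hmm : ∀ i, m i = m i.rev)
    (hlamrev : ∀ i, lam i = (lam i.rev)⁻¹) (q : Fin ℓ → Polynomial F)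
    (hq : ∀ i, (q i).natDegree ≤ m i) :
    toCode lam m (fun i => reflect (m i.rev) (q i.rev)) =
      fun i => blockShift (lam i) (revWhole hmm (toCode lam m q) i) := by
  funext i j
  have hmi : m i.rev = m i := (hmm i).symm
  simp only [toCode, blockShift, revWhole, LinearMap.coe_mk, AddHom.coe_mk,
    Fin.val_rev, Fin.coe_cast]
  rw [hmi, hlamrev i]
  rw [blockA (hm i) (hlam i.rev) (q i.rev) (hmi ▸ hq i.rev) j.isLt]
  have hjlt := j.isLt
  by_cases h : (j : ℕ) = 0
  · rw [if_pos h, if_pos h]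
    congr 2
    omega
  · rw [if_neg h, if_neg h]
    congr 1
    omega

lemma key10 (hm : ∀ i, 0 < m i) (hlam : ∀ i, lam i ≠ 0) (hmm : ∀ i, m i = m i.rev)
    (hlamrev : ∀ i, lam i = (lam i.rev)⁻¹) (q : Fin ℓ → Polynomial F) :
    (fun i => blockShift (lam i) (revWhole hmm (toCode lam m (fun i' => X * q i')) i))
      = revWhole hmm (toCode lam m q) := by
  funext i j
  have hmi : m i.rev = m i := (hmm i).symm
  simp only [toCode, blockShift, revWhole, LinearMap.coe_mk, AddHom.coe_mk,
    Fin.val_rev, Fin.coe_cast]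
  rw [hmi]
  have hjlt := j.isLt
  by_cases h : (j : ℕ) = 0
  · rw [if_pos h]
    rw [show m i - (m i - 1 + 1) = 0 from by omega]
    rw [coeff_mod_X_mul (hm i) (lam i.rev) (q i.rev) 0 (hm i)]
    rw [if_pos rfl, hlamrev i, ← mul_assoc, inv_mul_cancel₀ (hlam i.rev), one_mul]
    congr 1
    omega
  · rw [if_neg h]
    rw [show m i - ((j : ℕ) - 1 + 1) = m i - (j : ℕ) from by omega]
    rw [coeff_mod_X_mul (hm i) (lam i.rev) (q i.rev) (m i - (j : ℕ)) (by omega)]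
    rw [if_neg (by omega)]
    congr 1

omit [Field F] in
lemma congr_block {v : ∀ i, Fin (m i) → F} {i1 i2 : Fin ℓ} (h : i1 = i2)
    {j1 : Fin (m i1)} {j2 : Fin (m i2)} (hj : (j1 : ℕ) = (j2 : ℕ)) :
    v i1 j1 = v i2 j2 := by
  subst h
  exact congrArg (v i1) (Fin.ext hj)

end Stmt19Aux

/-- Let `C` be a Λ-MT code with GPM `G` and identical-equation matrix
`A`, with `mᵢ = m_{ℓ-i+1}` and `λᵢ = λ_{ℓ-i+1}⁻¹`, entries of column `j` of `G` of degree
at most `mⱼ`, and `N = lcm(tᵢ mᵢ)`.  Then `C` is reversible iff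
`G(1/x)·diag(x^{mᵢ})·J_ℓ·diag((x^N-1)/(x^{mᵢ}-λᵢ))·A ≡ 0 (mod x^N-1)`. -/
theorem stmt19 {F : Type*} [Field F] [Fintype F] {ℓ : ℕ} {m : Fin ℓ → ℕ}
    (hm : ∀ i, 0 < m i) {lam : Fin ℓ → F} (hlam : ∀ i, lam i ≠ 0)
    (hmm : ∀ i, m i = m i.rev) (hlamrev : ∀ i, lam i = (lam i.rev)⁻¹)
    (CC : Submodule F (∀ i, Fin (m i) → F)) (hC : IsMT lam CC)
    (G A : Matrix (Fin ℓ) (Fin ℓ) (Polynomial F)) (hG : IsGPM lam m CC G)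
    (hA : A * G = Matrix.diagonal (fun i => X ^ (m i) - Polynomial.C (lam i)))
    (hdeg : ∀ i j, (G i j).natDegree ≤ m j)
    {N : ℕ} (hN : N = Finset.univ.lcm (fun i => orderOf (lam i) * m i)) :
    CC.map (revWhole hmm) = CC ↔
      ∀ i j : Fin ℓ, (X ^ N - 1 : Polynomial F) ∣
        (((Matrix.of fun a b => Polynomial.reflect (m b) (G a b)) *
          (1 : Matrix (Fin ℓ) (Fin ℓ) (Polynomial F)).submatrix id Fin.rev *
          Matrix.diagonal (fun i => (X ^ N - 1) / (X ^ (m i) - Polynomial.C (lam i))) *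
          A : Matrix (Fin ℓ) (Fin ℓ) (Polynomial F))) i j := by
  classical
  set d : Fin ℓ → Polynomial F :=
    fun i => (X ^ N - 1) / (X ^ (m i) - Polynomial.C (lam i)) with hd
  set f : Fin ℓ → Polynomial F := fun i => X ^ (m i) - Polynomial.C (lam i) with hf
  -- basic facts about N and the moduli
  have hord : ∀ i, 0 < orderOf (lam i) := by
    intro i
    have h1 : (lam i) ^ (Fintype.card F - 1) = 1 :=
      FiniteField.pow_card_sub_one_eq_one _ (hlam i)
    have h2 : 0 < Fintype.card F - 1 := by
      have := Fintype.one_lt_card (α := F)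
      omega
    exact (isOfFinOrder_iff_pow_eq_one.2 ⟨_, h2, h1⟩).orderOf_pos
  have hNpos : 0 < N := by
    rcases Nat.eq_zero_or_pos N with h0 | h; swap
    · exact h
    exfalso
    rw [h0] at hN
    obtain ⟨i, _, hi⟩ := (Finset.lcm_eq_zero_iff).1 hN.symm
    have := hord i
    have := hm i
    have : orderOf (lam i) * m i ≠ 0 := by positivity
    exact this hi
  have hc0 : (X ^ N - 1 : Polynomial F) ≠ 0 := by
    have h1 : (X ^ N - Polynomial.C (1 : F)).Monic := monic_X_pow_sub_C 1 hNpos.ne'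
    simpa using h1.ne_zero
  have hdvdN : ∀ i, orderOf (lam i) * m i ∣ N := fun i =>
    hN ▸ Finset.dvd_lcm (Finset.mem_univ i)
  have hfd : ∀ i, f i ∣ (X ^ N - 1 : Polynomial F) := fun i =>
    Stmt19Aux.fdvd _ _ (hdvdN i)
  have hfne : ∀ i, f i ≠ 0 := fun i => (monic_X_pow_sub_C _ (hm i).ne').ne_zero
  have hdf : ∀ i, d i * f i = X ^ N - 1 := by
    intro i
    rw [hd, mul_comm]
    exact EuclideanDomain.mul_div_cancel' (hfne i) (hfd i)
  -- membership criterion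
  have hmem : ∀ q : Fin ℓ → Polynomial F, toCode lam m q ∈ CC ↔
      ∀ j, (X ^ N - 1 : Polynomial F) ∣ ∑ i, q i * (d i * A i j) := by
    intro q
    have h1 : toCode lam m q ∈ CC ↔
        q ∈ Submodule.span (Polynomial F) (Set.range fun i => G i) := by
      constructor
      · intro h
        have h2 : q ∈ ({q | toCode lam m q ∈ CC} : Set (Fin ℓ → Polynomial F)) := h
        rw [← hG.2] at h2
        exact h2
      · intro h
        have h2 : q ∈ (Submodule.span (Polynomial F) (Set.range fun i => G i) :
            Set (Fin ℓ → Polynomial F)) := h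
        rw [hG.2] at h2
        exact h2
    rw [h1]
    exact Stmt19Aux.mem_iff_dvd hc0 hG.1 hA hdf q
  -- identification of the matrix entries
  have hentry : ∀ a j, ((Matrix.of fun a b => Polynomial.reflect (m b) (G a b)) *
      (1 : Matrix (Fin ℓ) (Fin ℓ) (Polynomial F)).submatrix id Fin.rev *
      Matrix.diagonal d * A) a j
        = ∑ i, Polynomial.reflect (m i.rev) (G a i.rev) * (d i * A i j) := by
    intro a j
    have hMP : ∀ (M : Matrix (Fin ℓ) (Fin ℓ) (Polynomial F)) (b : Fin ℓ),
        (M * (1 : Matrix (Fin ℓ) (Fin ℓ) (Polynomial F)).submatrix id Fin.rev) a b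
          = M a b.rev := by
      intro M b
      rw [Matrix.mul_apply, Finset.sum_eq_single b.rev]
      · simp [Matrix.submatrix_apply, Matrix.one_apply]
      · intro c _ hc
        simp [Matrix.submatrix_apply, Matrix.one_apply, hc]
      · simp
    rw [Matrix.mul_apply]
    refine Finset.sum_congr rfl fun i _ => ?_
    rw [Matrix.mul_diagonal, hMP, Matrix.of_apply, mul_assoc]
  -- the T-shift invariance
  have hT : ∀ v : ∀ i, Fin (m i) → F,
      ((fun i => blockShift (lam i) (v i)) ∈ CC ↔ v ∈ CC) :=
    Stmt19Aux.T_mem_iff hlam hC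
  -- rows of G are in the code
  have hrows : ∀ a, toCode lam m (G a) ∈ CC := by
    intro a
    have h1 : G a ∈ (Submodule.span (Polynomial F) (Set.range fun i => G i) :
        Set (Fin ℓ → Polynomial F)) := Submodule.subset_span ⟨a, rfl⟩
    rw [hG.2] at h1
    exact h1
  -- key equivalence for each row
  have hkey : ∀ a : Fin ℓ,
      ((∀ j, (X ^ N - 1 : Polynomial F) ∣
          ∑ i, Polynomial.reflect (m i.rev) (G a i.rev) * (d i * A i j)) ↔
        revWhole hmm (toCode lam m (G a)) ∈ CC) := by
    intro a
    have e1 := hmem (fun i => Polynomial.reflect (m i.rev) (G a i.rev))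
    rw [Stmt19Aux.key9 hm hlam hmm hlamrev (G a) (fun i => hdeg a i)] at e1
    exact e1.symm.trans (hT _)
  constructor
  · intro h a j
    have h1 : revWhole hmm (toCode lam m (G a)) ∈ CC := by
      have h2 : revWhole hmm (toCode lam m (G a)) ∈ CC.map (revWhole hmm) :=
        Submodule.mem_map_of_mem (hrows a)
      rwa [h] at h2
    have h3 := ((hkey a).2 h1) j
    rwa [hentry a j]
  · intro h
    have hrev : ∀ v ∈ CC, revWhole hmm v ∈ CC := by
      intro v hv
      obtain ⟨q, hq⟩ := Stmt19Aux.exists_poly lam m hm v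
      have hqspan : q ∈ Submodule.span (Polynomial F) (Set.range fun i => G i) := by
        have h2 : q ∈ ({q | toCode lam m q ∈ CC} : Set (Fin ℓ → Polynomial F)) := by
          show toCode lam m q ∈ CC
          rw [hq]
          exact hv
        rw [← hG.2] at h2
        exact h2
      set S : Submodule F (Fin ℓ → Polynomial F) :=
        Submodule.comap ((revWhole hmm).comp (Stmt19Aux.toCodeLin lam m)) CC with hS
      have hs : Set.range (fun i => G i) ⊆ S := by
        rintro _ ⟨a, rfl⟩
        show revWhole hmm (toCode lam m (G a)) ∈ CC
        refine (hkey a).1 fun j => ?_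
        have h4 := h a j
        rwa [hentry a j] at h4
      have hX : ∀ p ∈ S, (fun i => X * p i) ∈ S := by
        intro p hp
        show revWhole hmm (toCode lam m (fun i => X * p i)) ∈ CC
        rw [← hT (revWhole hmm (toCode lam m (fun i => X * p i)))]
        rw [Stmt19Aux.key10 hm hlam hmm hlamrev p]
        exact hp
      have h5 := Stmt19Aux.span_subset_closed S hX hs q hqspan
      have h6 : revWhole hmm (toCode lam m q) ∈ CC := h5
      rwa [hq] at h6
    apply le_antisymm
    · rintro x hx
      obtain ⟨u, hu, rfl⟩ := Submodule.mem_map.1 hx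
      exact hrev u hu
    · intro v hv
      have h1 := hrev v hv
      have h2 : revWhole hmm (revWhole hmm v) = v := by
        funext i j
        show v i.rev.rev (Fin.rev (Fin.cast (hmm i.rev) (Fin.rev (Fin.cast (hmm i) j)))) = v i j
        have hir : i.rev.rev = i := Fin.rev_rev i
        have hval : ((Fin.rev (Fin.cast (hmm i.rev) (Fin.rev (Fin.cast (hmm i) j)))) : ℕ)
            = (j : ℕ) := by
          simp only [Fin.val_rev, Fin.coe_cast]
          have e1 : m i.rev = m i := (hmm i).symm
          have e2 : m i.rev.rev = m i.rev := (hmm i.rev).symm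
          have := j.isLt
          omega
        exact Stmt19Aux.congr_block hir hval
      rw [← h2]
      exact Submodule.mem_map_of_mem h1
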